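/- There is no deterministic algorithm for a single robot that perpetually explores every connected-over-time evolving ring of size n ≥ 3. Specifically, for any deterministic single-robot algorithm A and any n ≥ 3, there exists a connected-over-time evolving ring G_ω over C_n such that in the execution of A on G_ω the robot visits at most 2 (adjacent) nodes. -/

import Mathlib

/-- The graph on `ZMod n` whose edges are the recurrent edges of the evolving ring `E`. -/
def recGraph (n : ℕ) (E : ℕ → ZMod n → Prop) : SimpleGraph (ZMod n) where
  Adj x y := x ≠ y ∧
    ((y = x + 1 ∧ {t | E t x}.Infinite) ∨ (x = y + 1 ∧ {t | E t y}.Infinite))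
  symm := ⟨fun x y h => ⟨h.1.symm, h.2.elim (fun h' => Or.inr h') (fun h' => Or.inl h')⟩⟩
  loopless := ⟨fun x h => h.1 rfl⟩

/-- Execution of a deterministic single-robot algorithm `A` (mapping the current state
and the presence of the two adjacent edges to a new state and a direction, `true` for
clockwise `+1`, `false` for counter-clockwise `-1`) on the evolving ring `E`: the robot
moves in the chosen direction iff the corresponding edge is present. -/
def runRobot {State : Type} {n : ℕ} (A : State → Bool → Bool → State × Bool)
    (E : ℕ → ZMod n → Bool) (s0 : State) (p0 : ZMod n) : ℕ → State × ZMod n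
  | 0 => (s0, p0)
  | t + 1 =>
    let sp := runRobot A E s0 p0 t
    let out := A sp.1 (E t (sp.2 - 1)) (E t sp.2)
    (out.1,
      if out.2 then (if E t sp.2 then sp.2 + 1 else sp.2)
      else (if E t (sp.2 - 1) then sp.2 - 1 else sp.2))

/-- The trajectory of the robot against the adversary that, at each time, blocks the
outer edge adjacent to the robot's current position (starting at `v`, the robot stays
in `{v, v+1}`). -/
def trajAux {State : Type} {n : ℕ} (A : State → Bool → Bool → State × Bool)
    (s0 : State) (v : ZMod n) : ℕ → State × ZMod n
  | 0 => (s0, v)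
  | t + 1 =>
    let sp := trajAux A s0 v t
    let b : ZMod n := if sp.2 = v then v - 1 else v + 1
    let out := A sp.1 (decide ((sp.2 - 1 : ZMod n) ≠ b)) (decide (sp.2 ≠ b))
    (out.1,
      if out.2 then (if decide (sp.2 ≠ b) then sp.2 + 1 else sp.2)
      else (if decide ((sp.2 - 1 : ZMod n) ≠ b) then sp.2 - 1 else sp.2))

/-- A graph on `ZMod n` containing all ring edges except possibly the one at `w`
is connected. -/
lemma conn_of_path {n : ℕ} (hn : 3 ≤ n) (G : SimpleGraph (ZMod n)) (w : ZMod n)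
    (h : ∀ x : ZMod n, x ≠ w → G.Adj x (x + 1)) : G.Connected := by
  haveI : NeZero n := ⟨by omega⟩
  have key : ∀ k : ℕ, k < n → G.Reachable (w + 1) (w + 1 + (k : ZMod n)) := by
    intro k hk
    induction k with
    | zero => simpa using SimpleGraph.Reachable.refl _
    | succ k ih =>
      have hr := ih (by omega)
      have hadj : G.Adj (w + 1 + (k : ZMod n)) (w + 1 + (k : ZMod n) + 1) := by
        apply h
        intro hEq
        have h1 : (1 : ZMod n) + (k : ZMod n) = 0 := by
          have h2 : w + (1 + (k : ZMod n)) = w + 0 := by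
            rw [← add_assoc, hEq, add_zero]
          exact add_left_cancel h2
        have h0 : (((k + 1 : ℕ)) : ZMod n) = 0 := by
          push_cast; rw [add_comm]; exact h1
        rw [ZMod.natCast_eq_zero_iff] at h0
        have := Nat.le_of_dvd (by omega) h0
        omega
      have hstep : G.Reachable (w + 1 + (k : ZMod n)) (w + 1 + ((k + 1 : ℕ) : ZMod n)) := by
        have hc : (((k + 1 : ℕ)) : ZMod n) = (k : ZMod n) + 1 := by push_cast; ring
        rw [hc, ← add_assoc]
        exact hadj.reachable
      exact hr.trans hstep
  rw [SimpleGraph.connected_iff]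
  refine ⟨fun x y => ?_, inferInstance⟩
  have hx : ∀ z : ZMod n, G.Reachable (w + 1) z := by
    intro z
    have hz : z = w + 1 + (((z - (w + 1)).val : ℕ) : ZMod n) := by
      rw [ZMod.natCast_val, ZMod.cast_id]
      ring
    rw [hz]
    exact key _ (ZMod.val_lt _)
  exact (hx x).symm.trans (hx y)

/-- No deterministic single-robot algorithm perpetually explores every
connected-over-time evolving ring of size `n ≥ 3`: for every algorithm `A` there is a
connected-over-time evolving ring on which the robot only ever visits (at most) two
adjacent nodes. -/
theorem stmt8 {State : Type} (A : State → Bool → Bool → State × Bool)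
    (n : ℕ) (hn : 3 ≤ n) (s0 : State) (p0 : ZMod n) :
    ∃ E : ℕ → ZMod n → Bool,
      (recGraph n (fun t e => E t e = true)).Connected ∧
      ∃ v : ZMod n, ∀ t : ℕ,
        (runRobot A E s0 p0 t).2 = v ∨ (runRobot A E s0 p0 t).2 = v + 1 := by
  haveI : NeZero n := ⟨by omega⟩
  set v := p0 with hv
  -- basic distinctness facts
  have h1 : (1 : ZMod n) ≠ 0 := by
    have h : ((1 : ℕ) : ZMod n) ≠ 0 := by
      rw [Ne, ZMod.natCast_eq_zero_iff, Nat.dvd_one]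
      omega
    simpa using h
  have h2 : (2 : ZMod n) ≠ 0 := by
    have h : ((2 : ℕ) : ZMod n) ≠ 0 := by
      rw [Ne, ZMod.natCast_eq_zero_iff]
      intro hdvd
      have := Nat.le_of_dvd (by norm_num) hdvd
      omega
    simpa using h
  have hvv1 : v ≠ v + 1 := fun h => h1 (by linear_combination -h)
  have hvm1 : v - 1 ≠ v := fun h => h1 (by linear_combination -h)
  have hvm1p1 : v - 1 ≠ v + 1 := fun h => h2 (by linear_combination -h)
  have hvvm1 : v ≠ v - 1 := fun h => hvm1 h.symm
  -- the evolving ring blocking the outer edge adjacent to the robot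
  set E : ℕ → ZMod n → Bool := fun t x =>
    decide (x ≠ (if (trajAux A s0 v t).2 = v then v - 1 else v + 1)) with hE
  -- runRobot agrees with trajAux
  have hrun : ∀ t, runRobot A E s0 p0 t = trajAux A s0 v t := by
    intro t
    induction t with
    | zero => rfl
    | succ t ih =>
      show _ = trajAux A s0 v (t + 1)
      rw [runRobot, trajAux]
      rw [ih]
  -- position invariant
  have hpos : ∀ t, (trajAux A s0 v t).2 = v ∨ (trajAux A s0 v t).2 = v + 1 := by
    intro t
    induction t with
    | zero => left; rfl
    | succ t ih =>
      rw [trajAux]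
      rcases ih with h | h
      · simp only [h, if_true, ite_true]
        split_ifs with hb hEr hEl
        · right; rfl
        · left; rfl
        · simp at hEl
        · left; rfl
      · have hne : ¬((v + 1 : ZMod n) = v) := fun hh => hvv1 hh.symm
        have hl : (v + 1 - 1 : ZMod n) = v := by ring
        simp only [h]
        rw [if_neg hne]
        split_ifs with hb hEr hEl
        · simp at hEr
        · right; rfl
        · left; exact hl
        · right; rfl
  refine ⟨E, ?_, v, fun t => by rw [hrun t]; exact hpos t⟩
  -- connectivity of the recurrent graph
  have hadj : ∀ x : ZMod n, {t | E t x = true}.Infinite →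
      (recGraph n (fun t e => E t e = true)).Adj x (x + 1) := by
    intro x hx
    change x ≠ x + 1 ∧ _
    exact ⟨fun h => h1 (by linear_combination -h), Or.inl ⟨rfl, hx⟩⟩
  have hother : ∀ x : ZMod n, x ≠ v - 1 → x ≠ v + 1 → {t | E t x = true}.Infinite := by
    intro x hx1 hx2
    have huniv : {t | E t x = true} = Set.univ := by
      ext t
      simp only [Set.mem_univ, iff_true, Set.mem_setOf_eq, hE, decide_eq_true_eq]
      split <;> assumption
    rw [huniv]; exact Set.infinite_univ
  have hcover : {t | (trajAux A s0 v t).2 = v} ∪ {t | (trajAux A s0 v t).2 = v + 1}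
      = Set.univ := by
    ext t; simpa using hpos t
  have hone : {t | (trajAux A s0 v t).2 = v}.Infinite ∨
      {t | (trajAux A s0 v t).2 = v + 1}.Infinite := by
    rw [← Set.infinite_union, hcover]
    exact Set.infinite_univ
  rcases hone with hinf | hinf
  · -- the robot is at `v` infinitely often: edge `v+1` is recurrent, only `v-1` may die
    refine conn_of_path hn _ (v - 1) fun x hx => hadj x ?_
    by_cases hx2 : x = v + 1
    · subst hx2
      refine hinf.mono fun t ht => ?_
      simp only [Set.mem_setOf_eq] at ht ⊢
      simp [hE, ht, hvm1p1.symm]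
    · exact hother x hx hx2
  · -- the robot is at `v+1` infinitely often: edge `v-1` is recurrent, only `v+1` may die
    refine conn_of_path hn _ (v + 1) fun x hx => hadj x ?_
    by_cases hx2 : x = v - 1
    · subst hx2
      refine hinf.mono fun t ht => ?_
      simp only [Set.mem_setOf_eq] at ht ⊢
      have hne : (trajAux A s0 v t).2 ≠ v := by rw [ht]; exact fun h => hvv1 h.symm
      simp [hE, hne, hvm1p1]
    · exact hother x hx2 hx
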